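/- Let α, λ, r, d₀ be positive reals with 0 < d₀ < r, and suppose α·(r − d₀)·d₀/(4λ) ≤ e⁻¹. Then there exists σ > 0 such that α·(r − d₀) = λ·(2d₀/σ²)·exp(−d₀²/(2σ²)); equivalently, for every d ∈ ℝ^d with ‖d‖ = d₀, the SPELL force F_rad(d) = α·max(r − ‖d‖, 0)·d/‖d‖ and the Gaussian MMD force F_G(d;σ) = λ·(2/σ²)·exp(−‖d‖²/(2σ²))·d have equal Euclidean norms. -/

import Mathlib

/-- The SPELL radial repulsive force `F_rad(d) = α·max(r − ‖d‖, 0)·d/‖d‖`. -/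
noncomputable def spellForce {n : ℕ} (α r : ℝ) (d : EuclideanSpace ℝ (Fin n)) :
    EuclideanSpace ℝ (Fin n) :=
  (α * max (r - ‖d‖) 0 / ‖d‖) • d

/-- The Gaussian MMD force `F_G(d;σ) = λ·(2/σ²)·exp(−‖d‖²/(2σ²))·d`. -/
noncomputable def gaussForce {n : ℕ} (lam σ : ℝ) (d : EuclideanSpace ℝ (Fin n)) :
    EuclideanSpace ℝ (Fin n) :=
  (lam * (2 / σ ^ 2) * Real.exp (-‖d‖ ^ 2 / (2 * σ ^ 2))) • d

/-- Radius–bandwidth matching (existence): if `α(r − d₀)d₀/(4λ) ≤ e⁻¹`, then there is a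
bandwidth `σ > 0` with `α(r − d₀) = λ·(2d₀/σ²)·exp(−d₀²/(2σ²))`; equivalently, for every
`d ∈ ℝ^n` with `‖d‖ = d₀`, the SPELL force and the Gaussian MMD force have equal norms. -/
theorem stmt_5 (n : ℕ) (α lam r d₀ : ℝ) (hα : 0 < α) (hlam : 0 < lam)
    (hd₀ : 0 < d₀) (hd₀r : d₀ < r)
    (hc : α * (r - d₀) * d₀ / (4 * lam) ≤ Real.exp (-1)) :
    ∃ σ : ℝ, 0 < σ ∧
      α * (r - d₀) = lam * (2 * d₀ / σ ^ 2) * Real.exp (-d₀ ^ 2 / (2 * σ ^ 2)) ∧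
      ∀ d : EuclideanSpace ℝ (Fin n), ‖d‖ = d₀ →
        ‖spellForce α r d‖ = ‖gaussForce lam σ d‖ := by
  set c : ℝ := α * (r - d₀) * d₀ / (4 * lam) with hc_def
  have hrd : 0 < r - d₀ := by linarith
  have hcpos : 0 < c := by positivity
  -- find t ∈ (0,1] with t * exp(-t) = c
  have hcont : ContinuousOn (fun t : ℝ => t * Real.exp (-t)) (Set.Icc 0 1) := by
    fun_prop
  have hmem : c ∈ Set.Icc ((fun t : ℝ => t * Real.exp (-t)) 0)
      ((fun t : ℝ => t * Real.exp (-t)) 1) := by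
    simp only [Set.mem_Icc]
    constructor
    · simp; positivity
    · simpa using hc
  obtain ⟨t, ht01, htc⟩ := intermediate_value_Icc (by norm_num : (0:ℝ) ≤ 1) hcont hmem
  simp only at htc
  have htpos : 0 < t := by
    rcases lt_or_eq_of_le ht01.1 with h | h
    · exact h
    · exfalso; rw [← h] at htc; simp at htc; linarith
  refine ⟨d₀ / Real.sqrt (2 * t), by positivity, ?_, ?_⟩
  · have hσsq : (d₀ / Real.sqrt (2 * t)) ^ 2 = d₀ ^ 2 / (2 * t) := by
      rw [div_pow, Real.sq_sqrt (by positivity)]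
    rw [hσsq]
    have h1 : -d₀ ^ 2 / (2 * (d₀ ^ 2 / (2 * t))) = -t := by
      field_simp
    rw [h1]
    have h2 : lam * (2 * d₀ / (d₀ ^ 2 / (2 * t))) * Real.exp (-t)
        = (4 * lam / d₀) * (t * Real.exp (-t)) := by
      field_simp; ring
    rw [h2, htc, hc_def]
    field_simp
  · intro d hd
    have hmax : max (r - ‖d‖) 0 = r - d₀ := by rw [hd]; exact max_eq_left hrd.le
    simp only [spellForce, gaussForce, norm_smul, hd, hmax, Real.norm_eq_abs]
    have hσsq : (d₀ / Real.sqrt (2 * t)) ^ 2 = d₀ ^ 2 / (2 * t) := by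
      rw [div_pow, Real.sq_sqrt (by positivity)]
    rw [hσsq]
    rw [abs_of_pos (by positivity), abs_of_pos (by positivity)]
    have h1 : -d₀ ^ 2 / (2 * (d₀ ^ 2 / (2 * t))) = -t := by field_simp
    rw [h1, max_eq_left hrd.le]
    have h2 : α * (r - d₀) / d₀ * d₀ = α * (r - d₀) := by field_simp
    rw [h2]
    have h3 : lam * (2 / (d₀ ^ 2 / (2 * t))) * Real.exp (-t) * d₀
        = (4 * lam / d₀) * (t * Real.exp (-t)) := by
      field_simp; ring
    rw [h3, htc, hc_def]
    field_simp
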